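/- For every integer m ≥ 1: (i) Σ_{j=0}^m (m+2) / ((j+1)²(m+2−j)) < 2π²/3; (ii) Σ_{j=1}^m (m+2) / (j³(m+2−j)) < 8; and (iii) Σ_{j=2}^m (m+1) / (j³(m+2−j)) < 61/10. -/

import Mathlib

open Finset Real

lemma basel_fin (s : Finset ℕ) : ∑ j ∈ s, 1/((j:ℝ))^2 ≤ Real.pi^2/6 :=
  sum_le_hasSum s (fun i _ => by positivity) hasSum_zeta_two

lemma basel_succ (m : ℕ) : ∑ j ∈ Finset.range (m+1), 1/((j:ℝ)+1)^2 ≤ Real.pi^2/6 := by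
  have h : ∑ j ∈ Finset.range (m+1), 1/((j:ℝ)+1)^2
      = ∑ k ∈ (Finset.range (m+1)).image (fun j : ℕ => j + 1), 1/((k:ℝ))^2 := by
    rw [Finset.sum_image (by intro a _ b _ h; beta_reduce at h; omega)]
    push_cast; rfl
  rw [h]; exact basel_fin _

lemma basel_refl (m : ℕ) : ∑ j ∈ Finset.range (m+1), 1/((m:ℝ)+2-(j:ℝ))^2 ≤ Real.pi^2/6 := by
  have h : ∑ j ∈ Finset.range (m+1), 1/((m:ℝ)+2-(j:ℝ))^2
      = ∑ k ∈ (Finset.range (m+1)).image (fun j : ℕ => m + 2 - j), 1/((k:ℝ))^2 := by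
    rw [Finset.sum_image (by intro a ha b hb h; simp [Finset.mem_range] at ha hb; beta_reduce at h; omega)]
    apply Finset.sum_congr rfl
    intro j hj
    have hj' : j ≤ m := Nat.lt_succ_iff.mp (Finset.mem_range.mp hj)
    have : ((m + 2 - j : ℕ) : ℝ) = (m:ℝ) + 2 - (j:ℝ) := by
      have : j ≤ m + 2 := by omega
      push_cast [Nat.cast_sub this]; ring
    rw [this]
  rw [h]; exact basel_fin _

lemma key1 (x d : ℝ) (hx : 1 ≤ x) (hd : 2 ≤ d) :
    (x + d - 1)/(x^2*d) ≤ 3/2 * (1/x^2) + 1/2 * (1/d^2) := by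
  have hx0 : (0:ℝ) < x := by linarith
  have hd0 : (0:ℝ) < d := by linarith
  have h1 : 3/2 * (1/x^2) + 1/2 * (1/d^2) = (3*d^2 + x^2)/(2*x^2*d^2) := by
    field_simp
  rw [h1, div_le_div_iff₀ (by positivity) (by positivity)]
  nlinarith [mul_nonneg (mul_nonneg (sq_nonneg x) hd0.le) (sq_nonneg (d - x)),
    mul_pos (mul_pos hx0 hx0) (mul_pos hd0 hd0)]

lemma key2 (c x d : ℝ) (hx : 1 ≤ x) (hd : 2 ≤ d) (hc : c ≤ x + d) :
    c/(x^3*d) ≤ 3/2 * (1/x^2) := by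
  have hx0 : (0:ℝ) < x := by linarith
  have hd0 : (0:ℝ) < d := by linarith
  rw [div_le_iff₀ (by positivity)]
  have h1 : 3/2 * (1/x^2) * (x^3*d) = 3/2 * x * d := by field_simp
  rw [h1]
  nlinarith [mul_le_mul_of_nonneg_left hd hx0.le, mul_le_mul_of_nonneg_right hx hd0.le]

theorem statement18 (m : ℕ) (hm : 1 ≤ m) :
    (∑ j ∈ Finset.range (m + 1),
        ((m : ℝ) + 2) / (((j : ℝ) + 1) ^ 2 * ((m : ℝ) + 2 - (j : ℝ)))
      < 2 * Real.pi ^ 2 / 3) ∧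
    (∑ j ∈ Finset.Icc 1 m,
        ((m : ℝ) + 2) / ((j : ℝ) ^ 3 * ((m : ℝ) + 2 - (j : ℝ))) < 8) ∧
    (∑ j ∈ Finset.Icc 2 m,
        ((m : ℝ) + 1) / ((j : ℝ) ^ 3 * ((m : ℝ) + 2 - (j : ℝ))) < 61 / 10) := by
  have hpi : (0:ℝ) < Real.pi := Real.pi_pos
  have hpi2 : Real.pi^2 < 10 := by nlinarith [Real.pi_lt_d2, Real.pi_pos]
  refine ⟨?_, ?_, ?_⟩
  · calc ∑ j ∈ Finset.range (m + 1),
        ((m : ℝ) + 2) / (((j : ℝ) + 1) ^ 2 * ((m : ℝ) + 2 - (j : ℝ)))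
        ≤ ∑ j ∈ Finset.range (m + 1),
            (3/2 * (1/((j:ℝ)+1)^2) + 1/2 * (1/((m:ℝ)+2-(j:ℝ))^2)) := by
          apply Finset.sum_le_sum
          intro j hj
          have hj' : (j:ℝ) ≤ m := by
            exact_mod_cast Nat.lt_succ_iff.mp (Finset.mem_range.mp hj)
          have h0 : (0:ℝ) ≤ (j:ℝ) := Nat.cast_nonneg j
          have h := key1 ((j:ℝ)+1) ((m:ℝ)+2-(j:ℝ)) (by linarith) (by linarith)
          have e : ((j:ℝ)+1) + ((m:ℝ)+2-(j:ℝ)) - 1 = (m:ℝ) + 2 := by ring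
          rw [e] at h
          exact h
      _ = 3/2 * ∑ j ∈ Finset.range (m + 1), 1/((j:ℝ)+1)^2
          + 1/2 * ∑ j ∈ Finset.range (m + 1), 1/((m:ℝ)+2-(j:ℝ))^2 := by
          rw [Finset.sum_add_distrib, Finset.mul_sum, Finset.mul_sum]
      _ ≤ 3/2 * (Real.pi^2/6) + 1/2 * (Real.pi^2/6) := by
          gcongr
          · exact basel_succ m
          · exact basel_refl m
      _ < 2 * Real.pi ^ 2 / 3 := by nlinarith
  · calc ∑ j ∈ Finset.Icc 1 m,
        ((m : ℝ) + 2) / ((j : ℝ) ^ 3 * ((m : ℝ) + 2 - (j : ℝ)))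
        ≤ ∑ j ∈ Finset.Icc 1 m, (3/2 * (1/((j:ℝ))^2)) := by
          apply Finset.sum_le_sum
          intro j hj
          obtain ⟨h1, h2⟩ := Finset.mem_Icc.mp hj
          have h1' : (1:ℝ) ≤ (j:ℝ) := by exact_mod_cast h1
          have h2' : (j:ℝ) ≤ m := by exact_mod_cast h2
          exact key2 ((m:ℝ)+2) ((j:ℝ)) ((m:ℝ)+2-(j:ℝ)) h1' (by linarith) (by linarith)
      _ = 3/2 * ∑ j ∈ Finset.Icc 1 m, 1/((j:ℝ))^2 := by rw [Finset.mul_sum]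
      _ ≤ 3/2 * (Real.pi^2/6) := by gcongr; exact basel_fin _
      _ < 8 := by nlinarith
  · calc ∑ j ∈ Finset.Icc 2 m,
        ((m : ℝ) + 1) / ((j : ℝ) ^ 3 * ((m : ℝ) + 2 - (j : ℝ)))
        ≤ ∑ j ∈ Finset.Icc 2 m, (3/2 * (1/((j:ℝ))^2)) := by
          apply Finset.sum_le_sum
          intro j hj
          obtain ⟨h1, h2⟩ := Finset.mem_Icc.mp hj
          have h1' : (2:ℝ) ≤ (j:ℝ) := by exact_mod_cast h1
          have h2' : (j:ℝ) ≤ m := by exact_mod_cast h2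
          exact key2 ((m:ℝ)+1) ((j:ℝ)) ((m:ℝ)+2-(j:ℝ)) (by linarith) (by linarith) (by linarith)
      _ = 3/2 * ∑ j ∈ Finset.Icc 2 m, 1/((j:ℝ))^2 := by rw [Finset.mul_sum]
      _ ≤ 3/2 * (Real.pi^2/6) := by gcongr; exact basel_fin _
      _ < 61/10 := by nlinarith
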